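/- The map ∇u₀ restricted to the unit sphere S² ⊂ ℝ³ is Lipschitz: there exists C > 0 with |∇u₀(x) − ∇u₀(y)| ≤ C|x−y| for all x, y ∈ S². Moreover, for every δ ∈ (0,1) there exists c > 0 such that |∇u₀(x) − ∇u₀(x₀)| ≥ c|x−x₀| whenever x ∈ S² and x₀ ∈ S² satisfies x₀₁² ≤ (1−δ)(x₀₂² + x₀₃²). -/

import Mathlib

open Real Set Metric
open scoped RealInnerProductSpace

noncomputable section

/-- `u₀(x) = (x₂² + x₃² − x₁²)/(√2·|x|)` (with value `0` at the origin, by `0`-division). -/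
def u0 : EuclideanSpace ℝ (Fin 3) → ℝ :=
  fun x => ((x 1) ^ 2 + (x 2) ^ 2 - (x 0) ^ 2) / (Real.sqrt 2 * ‖x‖)

set_option maxHeartbeats 1000000

namespace Statement18Aux

private lemma caseA (a b : ℝ) (ha : a^2 ≤ 1) (hb : 2*b^2 ≤ 1) (hab : 0 ≤ a+b)
    (hK : 0 ≤ 2*(a^2+a*b+b^2)-3) :
    (1-2*b^2)^2 ≤ 2*(2*(a^2+a*b+b^2)-3) - (a+b)*(3-4*(a^4+a^2*b^2+b^4)) := by
  nlinarith [sq_nonneg (a-b), sq_nonneg (1-2*a*b), sq_nonneg (2*a^2-1),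
    mul_nonneg (mul_nonneg (by linarith : (0:ℝ) ≤ 1-2*b^2) hab) hab,
    mul_nonneg hK hab, mul_nonneg (by linarith : (0:ℝ) ≤ 1-2*b^2) hab,
    mul_nonneg (by linarith : (0:ℝ) ≤ 1-a^2) hab, sq_nonneg (a+b), sq_nonneg (a*b-1/2)]

private lemma caseB (a b : ℝ) (ha : a^2 ≤ 1) (hb : 2*b^2 ≤ 1) (hab : 0 ≤ a+b)
    (hK : 2*(a^2+a*b+b^2)-3 ≤ 0) (hM : 0 ≤ (a+b)*(3-4*(a^4+a^2*b^2+b^4))) :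
    (1-2*b^2)^2 ≤ -(2*(2*(a^2+a*b+b^2)-3)) + (a+b)*(3-4*(a^4+a^2*b^2+b^4)) := by
  nlinarith [sq_nonneg (a-b), sq_nonneg (1-2*a*b), sq_nonneg (2*a^2-1),
    mul_nonneg (mul_nonneg (by linarith : (0:ℝ) ≤ 1-2*b^2) hab) hab,
    mul_nonneg (by linarith : (0:ℝ) ≤ 1-2*b^2) hab,
    mul_nonneg (by linarith : (0:ℝ) ≤ 1-a^2) hab, sq_nonneg (a+b), sq_nonneg (a*b-1/2),
    mul_nonneg (by linarith : (0:ℝ) ≤ -(2*(a^2+a*b+b^2)-3)) hab]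

private lemma caseC (a b : ℝ) (ha : a^2 ≤ 1) (hb : 2*b^2 ≤ 1) (hab : 0 ≤ a+b)
    (hK : 2*(a^2+a*b+b^2)-3 ≤ 0) (hM : (a+b)*(3-4*(a^4+a^2*b^2+b^4)) ≤ 0) :
    (1-2*b^2)^2 ≤ -(2*(2*(a^2+a*b+b^2)-3)) - (a+b)*(3-4*(a^4+a^2*b^2+b^4)) := by
  nlinarith [sq_nonneg (a-b), sq_nonneg (1-2*a*b), sq_nonneg (2*a^2-1),
    mul_nonneg (mul_nonneg (by linarith : (0:ℝ) ≤ 1-2*b^2) hab) hab,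
    mul_nonneg (by linarith : (0:ℝ) ≤ 1-2*b^2) hab,
    mul_nonneg (by linarith : (0:ℝ) ≤ 1-a^2) hab, sq_nonneg (a+b), sq_nonneg (a*b-1/2),
    mul_nonneg (by linarith : (0:ℝ) ≤ -(2*(a^2+a*b+b^2)-3)) hab]

private lemma claimD' (a b : ℝ) (ha : a^2 ≤ 1) (hb : 2*b^2 ≤ 1) (hab : 0 ≤ a+b) :
    (1-2*b^2)^2 ≤ 2*|2*(a^2+a*b+b^2)-3| + |(a+b)*(3-4*(a^4+a^2*b^2+b^4))| := by
  rcases le_or_gt 0 (2*(a^2+a*b+b^2)-3) with hK | hK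
  · have h := caseA a b ha hb hab hK
    have h1 : 2*(a^2+a*b+b^2)-3 ≤ |2*(a^2+a*b+b^2)-3| := le_abs_self _
    have h2 : -((a+b)*(3-4*(a^4+a^2*b^2+b^4))) ≤ |(a+b)*(3-4*(a^4+a^2*b^2+b^4))| :=
      neg_le_abs _
    linarith
  · rcases le_total 0 ((a+b)*(3-4*(a^4+a^2*b^2+b^4))) with hM | hM
    · have h := caseB a b ha hb hab hK.le hM
      have h1 : -(2*(a^2+a*b+b^2)-3) ≤ |2*(a^2+a*b+b^2)-3| := neg_le_abs _
      have h2 : (a+b)*(3-4*(a^4+a^2*b^2+b^4)) ≤ |(a+b)*(3-4*(a^4+a^2*b^2+b^4))| :=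
        le_abs_self _
      linarith
    · have h := caseC a b ha hb hab hK.le hM
      have h1 : -(2*(a^2+a*b+b^2)-3) ≤ |2*(a^2+a*b+b^2)-3| := neg_le_abs _
      have h2 : -((a+b)*(3-4*(a^4+a^2*b^2+b^4))) ≤ |(a+b)*(3-4*(a^4+a^2*b^2+b^4))| :=
        neg_le_abs _
      linarith

private lemma claimD (a b : ℝ) (ha : a^2 ≤ 1) (hb : 2*b^2 ≤ 1) :
    (1-2*b^2)^2 ≤ 2*|2*(a^2+a*b+b^2)-3| + |(a+b)*(3-4*(a^4+a^2*b^2+b^4))| := by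
  rcases le_total 0 (a+b) with hab | hab
  · exact claimD' a b ha hb hab
  · have h := claimD' (-a) (-b) (by nlinarith) (by nlinarith) (by linarith)
    have e1 : 2*((-a)^2+(-a)*(-b)+(-b)^2)-3 = 2*(a^2+a*b+b^2)-3 := by ring
    have e2 : (-a + -b)*(3-4*((-a)^4+(-a)^2*(-b)^2+(-b)^4))
        = -((a+b)*(3-4*(a^4+a^2*b^2+b^4))) := by ring
    rw [e1, e2, abs_neg] at h
    calc (1-2*b^2)^2 = (1-2*(-b)^2)^2 := by ring
    _ ≤ _ := h

private lemma claimF (a b : ℝ) (ha : a^2 ≤ 1) (hb : 2*b^2 ≤ 1) :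
    (1-2*b^2)^4 ≤ 6*(2*(a^2+a*b+b^2)-3)^2 + 12*((a+b)*(3-4*(a^4+a^2*b^2+b^4)))^2 := by
  have hD := claimD a b ha hb
  have h1 : (0:ℝ) ≤ 2*|2*(a^2+a*b+b^2)-3| + |(a+b)*(3-4*(a^4+a^2*b^2+b^4))| + (1-2*b^2)^2 := by
    positivity
  nlinarith [mul_nonneg (sub_nonneg.2 hD) h1, sq_abs (2*(a^2+a*b+b^2)-3),
    sq_abs ((a+b)*(3-4*(a^4+a^2*b^2+b^4))),
    sq_nonneg (|2*(a^2+a*b+b^2)-3| - |(a+b)*(3-4*(a^4+a^2*b^2+b^4))|),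
    abs_nonneg (2*(a^2+a*b+b^2)-3), abs_nonneg ((a+b)*(3-4*(a^4+a^2*b^2+b^4)))]

private lemma coreAux (a b S2 T2 K L d : ℝ) (hT2 : 1/2 ≤ T2) (hT9 : T2 ≤ 9*S2)
    (hSq4 : S2 + (a+b)^2 ≤ 4) (hFd : d^4/200 ≤ K^2/2 + (a+b)^2*L^2) (hS2nn : 0 ≤ S2) :
    d^4/7200 * ((a-b)^2*(S2*T2) + ((a-b)*(a+b))^2*T2) ≤
      (a-b)^2*K^2*(S2*T2) + ((a^2-b^2)*L)^2*S2 := by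
  have hT2nn : (0:ℝ) ≤ T2 := by linarith
  have m1 : T2*(S2+(a+b)^2) ≤ 36*S2 := by
    nlinarith [hT9, hSq4, sq_nonneg (a+b), hT2nn, hS2nn]
  have m2 : d^4/200 ≤ K^2*T2 + (a+b)^2*L^2 := by
    nlinarith [hFd, hT2, sq_nonneg K]
  have n1 := mul_le_mul_of_nonneg_left m1 (show (0:ℝ) ≤ d^4/7200*(a-b)^2 by positivity)
  have n2 := mul_le_mul_of_nonneg_left m2 (show (0:ℝ) ≤ (a-b)^2*S2 by positivity)
  nlinarith [n1, n2]

private lemma core_pq (δ a b p q : ℝ) (hδ0 : 0 < δ) (hδ1 : δ < 1)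
    (hp0 : 0 ≤ p) (hq0 : 0 ≤ q) (hp1 : p^2 = 1-a^2) (hq1 : q^2 = 1-b^2)
    (hb2 : 2*b^2 ≤ 1) (he : δ/2 ≤ 1-2*b^2) :
    δ^4/7200 * ((a-b)^2 + (p-q)^2) ≤
      (a-b)^2*(2*(a^2+a*b+b^2)-3)^2 + ((1+2*a^2)*p - (1+2*b^2)*q)^2 := by
  have ha2 : a^2 ≤ 1 := by nlinarith [sq_nonneg p]
  have hqpos : 0 < q := by nlinarith [sq_nonneg b]
  have hSpos : 0 < p + q := by linarith
  have hTpos : 0 < (1+2*a^2)*p + (1+2*b^2)*q := by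
    nlinarith [mul_nonneg (sq_nonneg a) hp0, mul_nonneg (sq_nonneg b) hq0]
  have hS2 : 1/2 ≤ (p+q)^2 := by nlinarith [mul_nonneg hp0 hq0]
  have hTS : p + q ≤ (1+2*a^2)*p + (1+2*b^2)*q := by
    nlinarith [mul_nonneg (sq_nonneg a) hp0, mul_nonneg (sq_nonneg b) hq0]
  have hT2 : 1/2 ≤ ((1+2*a^2)*p + (1+2*b^2)*q)^2 := by nlinarith [hS2, hSpos, hTS]
  have hT9 : ((1+2*a^2)*p + (1+2*b^2)*q)^2 ≤ 9*((p+q)^2) := by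
    have h3 : (1+2*a^2)*p + (1+2*b^2)*q ≤ 3*(p+q) := by
      nlinarith [mul_nonneg (by linarith : (0:ℝ) ≤ 2-2*a^2) hp0,
        mul_nonneg (by linarith : (0:ℝ) ≤ 2-2*b^2) hq0]
    nlinarith [hTpos]
  have hSq4 : (p+q)^2 + (a+b)^2 ≤ 4 := by
    nlinarith [sq_nonneg (a-b), sq_nonneg (p-q)]
  have hF := claimF a b ha2 hb2
  have he4 : (δ/2)^4 ≤ (1-2*b^2)^4 := pow_le_pow_left₀ (by linarith) he 4
  have hFd : δ^4/200 ≤ (2*(a^2+a*b+b^2)-3)^2/2 + (a+b)^2*(3-4*(a^4+a^2*b^2+b^4))^2 := by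
    nlinarith [hF, he4]
  have hid2 : (((1+2*a^2)*p - (1+2*b^2)*q)*((1+2*a^2)*p + (1+2*b^2)*q))^2
      = ((a^2-b^2)*(3-4*(a^4+a^2*b^2+b^4)))^2 := by
    have h1 : (((1+2*a^2)*p - (1+2*b^2)*q)*((1+2*a^2)*p + (1+2*b^2)*q))^2
        = ((1+2*a^2)^2*(p^2) - (1+2*b^2)^2*(q^2))^2 := by ring
    rw [hp1, hq1] at h1
    rw [h1]; ring
  have hid3 : ((p-q)*(p+q))^2 = ((a-b)*(a+b))^2 := by
    have h1 : ((p-q)*(p+q))^2 = ((p^2) - (q^2))^2 := by ring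
    rw [hp1, hq1] at h1
    rw [h1]; ring
  have hST2pos : 0 < ((p+q)*((1+2*a^2)*p + (1+2*b^2)*q))^2 := by positivity
  have big : δ^4/7200 * ((a-b)^2 + (p-q)^2) * ((p+q)*((1+2*a^2)*p + (1+2*b^2)*q))^2 ≤
      ((a-b)^2*(2*(a^2+a*b+b^2)-3)^2 + ((1+2*a^2)*p - (1+2*b^2)*q)^2)
        * ((p+q)*((1+2*a^2)*p + (1+2*b^2)*q))^2 := by
    have eL : δ^4/7200 * ((a-b)^2 + (p-q)^2) * ((p+q)*((1+2*a^2)*p + (1+2*b^2)*q))^2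
        = δ^4/7200 * ((a-b)^2*((p+q)^2*(((1+2*a^2)*p + (1+2*b^2)*q)^2))
          + ((p-q)*(p+q))^2*(((1+2*a^2)*p + (1+2*b^2)*q)^2)) := by ring
    have eR : ((a-b)^2*(2*(a^2+a*b+b^2)-3)^2 + ((1+2*a^2)*p - (1+2*b^2)*q)^2)
        * ((p+q)*((1+2*a^2)*p + (1+2*b^2)*q))^2
        = (a-b)^2*(2*(a^2+a*b+b^2)-3)^2*((p+q)^2*(((1+2*a^2)*p + (1+2*b^2)*q)^2))
          + (((1+2*a^2)*p - (1+2*b^2)*q)*((1+2*a^2)*p + (1+2*b^2)*q))^2*((p+q)^2) := by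
      ring
    rw [eL, eR, hid2, hid3]
    exact coreAux a b ((p+q)^2) (((1+2*a^2)*p + (1+2*b^2)*q)^2)
      (2*(a^2+a*b+b^2)-3) (3-4*(a^4+a^2*b^2+b^4)) δ hT2 hT9 hSq4 hFd (sq_nonneg _)
  exact le_of_mul_le_mul_right big hST2pos

private lemma lower_scalar (δ a b v1 v2 w1 w2 : ℝ) (hδ0 : 0 < δ) (hδ1 : δ < 1)
    (hx : a^2 + v1^2 + v2^2 = 1) (hy : b^2 + w1^2 + w2^2 = 1)
    (hcone : b^2 ≤ (1-δ) * (w1^2 + w2^2)) :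
    δ^4/7200 * ((a-b)^2 + (v1-w1)^2 + (v2-w2)^2) ≤
      ((2*a^3-3*a) - (2*b^3-3*b))^2 + ((1+2*a^2)*v1 - (1+2*b^2)*w1)^2
        + ((1+2*a^2)*v2 - (1+2*b^2)*w2)^2 := by
  obtain ⟨p, hp0, hp⟩ : ∃ p : ℝ, 0 ≤ p ∧ p^2 = v1^2+v2^2 :=
    ⟨Real.sqrt (v1^2+v2^2), Real.sqrt_nonneg _, Real.sq_sqrt (by positivity)⟩
  obtain ⟨q, hq0, hq⟩ : ∃ q : ℝ, 0 ≤ q ∧ q^2 = w1^2+w2^2 :=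
    ⟨Real.sqrt (w1^2+w2^2), Real.sqrt_nonneg _, Real.sq_sqrt (by positivity)⟩
  have hp1 : p^2 = 1 - a^2 := by rw [hp]; linarith
  have hq1 : q^2 = 1 - b^2 := by rw [hq]; linarith
  have ha2 : a^2 ≤ 1 := by nlinarith [sq_nonneg v1, sq_nonneg v2]
  have hb1 : b^2 ≤ 1 := by nlinarith [sq_nonneg w1, sq_nonneg w2]
  have hcone' : (2-δ)*b^2 ≤ 1-δ := by nlinarith
  have hb2 : 2*b^2 ≤ 1 := by nlinarith [sq_nonneg b]
  have he : δ/2 ≤ 1 - 2*b^2 := by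
    nlinarith [hcone', hb2, mul_nonneg hδ0.le (by linarith : (0:ℝ) ≤ 1-2*b^2)]
  have hs : v1*w1 + v2*w2 ≤ p*q := by
    have h1 : (v1*w1+v2*w2)^2 ≤ (p*q)^2 := by
      have h0 := sq_nonneg (v1*w2 - v2*w1)
      have h2 : (p*q)^2 = (v1^2+v2^2)*(w1^2+w2^2) := by rw [mul_pow, hp, hq]
      nlinarith
    by_contra hlt
    push_neg at hlt
    nlinarith [h1, mul_nonneg hp0 hq0]
  have hAB : (1:ℝ) ≤ (1+2*a^2)*(1+2*b^2) := by
    nlinarith [sq_nonneg a, sq_nonneg b, mul_nonneg (sq_nonneg a) (sq_nonneg b)]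
  have hdelta1 : δ^4/7200 ≤ 1 := by
    nlinarith [pow_le_one₀ hδ0.le hδ1.le (n := 4)]
  have hmono := mul_le_mul_of_nonneg_left (sub_nonneg.2 hs)
    (show (0:ℝ) ≤ 2*((1+2*a^2)*(1+2*b^2)) - 2*(δ^4/7200) by nlinarith)
  have core := core_pq δ a b p q hδ0 hδ1 hp0 hq0 hp1 hq1 hb2 he
  have hmid : ((1+2*a^2)*v1 - (1+2*b^2)*w1)^2 + ((1+2*a^2)*v2 - (1+2*b^2)*w2)^2
      = (1+2*a^2)^2*(p^2) + (1+2*b^2)^2*(q^2)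
        - 2*((1+2*a^2)*(1+2*b^2))*(v1*w1+v2*w2) := by
    rw [hp, hq]; ring
  have hxy : (v1-w1)^2 + (v2-w2)^2 = (p^2) + (q^2) - 2*(v1*w1+v2*w2) := by
    rw [hp, hq]; ring
  have hfinal : ((1+2*a^2)*p - (1+2*b^2)*q)^2 =
      (1+2*a^2)^2*(p^2) + (1+2*b^2)^2*(q^2) - 2*((1+2*a^2)*(1+2*b^2))*(p*q) := by ring
  have hpq : (p-q)^2 = p^2 + q^2 - 2*(p*q) := by ring
  rw [hpq] at core
  have lhs_eq : δ^4/7200 * ((a-b)^2 + (v1-w1)^2 + (v2-w2)^2)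
      = δ^4/7200 * ((a-b)^2 + (p^2 + q^2 - 2*(v1*w1+v2*w2))) := by
    linear_combination (δ^4/7200) * hxy
  have rhs_eq : ((2*a^3-3*a) - (2*b^3-3*b))^2 + ((1+2*a^2)*v1 - (1+2*b^2)*w1)^2
        + ((1+2*a^2)*v2 - (1+2*b^2)*w2)^2
      = (a-b)^2*(2*(a^2+a*b+b^2)-3)^2 + ((1+2*a^2)^2*(p^2) + (1+2*b^2)^2*(q^2)
        - 2*((1+2*a^2)*(1+2*b^2))*(v1*w1+v2*w2)) := by
    linear_combination hmid
  rw [lhs_eq, rhs_eq, hfinal] at *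
  linarith [core, hmono]

private lemma upperAux (A B x y : ℝ) :
    (A*x - B*y)^2 ≤ 2*A^2*(x-y)^2 + 2*(A-B)^2*y^2 := by
  nlinarith [sq_nonneg (A*(x-y) - (A-B)*y)]

private lemma upper_scalar (a b v1 v2 w1 w2 : ℝ)
    (hx : a^2 + v1^2 + v2^2 = 1) (hy : b^2 + w1^2 + w2^2 = 1) :
    ((2*a^3-3*a) - (2*b^3-3*b))^2 + ((1+2*a^2)*v1 - (1+2*b^2)*w1)^2
      + ((1+2*a^2)*v2 - (1+2*b^2)*w2)^2
    ≤ 72*((a-b)^2 + (v1-w1)^2 + (v2-w2)^2) := by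
  have ha2 : a^2 ≤ 1 := by nlinarith [sq_nonneg v1, sq_nonneg v2]
  have hb2 : b^2 ≤ 1 := by nlinarith [sq_nonneg w1, sq_nonneg w2]
  have hw : w1^2 + w2^2 ≤ 1 := by nlinarith [sq_nonneg b]
  have hK9 : (2*(a^2+a*b+b^2)-3)^2 ≤ 9 := by
    nlinarith [sq_nonneg (a+b), sq_nonneg (a-b)]
  have f1 : ((2*a^3-3*a) - (2*b^3-3*b))^2 ≤ 9*(a-b)^2 := by
    have hid : ((2*a^3-3*a) - (2*b^3-3*b))^2
        = (a-b)^2*(2*(a^2+a*b+b^2)-3)^2 := by ring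
    rw [hid]
    nlinarith [mul_le_mul_of_nonneg_left hK9 (sq_nonneg (a-b))]
  have hA9 : (1+2*a^2)^2 ≤ 9 := by nlinarith
  have hABd : ((1+2*a^2)-(1+2*b^2))^2 ≤ 16*(a-b)^2 := by
    have hh : ((1+2*a^2)-(1+2*b^2))^2 = 4*((a-b)^2*(a+b)^2) := by ring
    rw [hh]
    nlinarith [mul_le_mul_of_nonneg_left (show (a+b)^2 ≤ 4 by nlinarith [sq_nonneg (a-b)])
      (sq_nonneg (a-b))]
  have f2 : ((1+2*a^2)*v1 - (1+2*b^2)*w1)^2 ≤ 18*(v1-w1)^2 + 32*((a-b)^2*w1^2) := by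
    have h := upperAux (1+2*a^2) (1+2*b^2) v1 w1
    nlinarith [h, mul_le_mul_of_nonneg_right hA9 (sq_nonneg (v1-w1)),
      mul_le_mul_of_nonneg_right hABd (sq_nonneg w1)]
  have f3 : ((1+2*a^2)*v2 - (1+2*b^2)*w2)^2 ≤ 18*(v2-w2)^2 + 32*((a-b)^2*w2^2) := by
    have h := upperAux (1+2*a^2) (1+2*b^2) v2 w2
    nlinarith [h, mul_le_mul_of_nonneg_right hA9 (sq_nonneg (v2-w2)),
      mul_le_mul_of_nonneg_right hABd (sq_nonneg w2)]
  have f4 : (a-b)^2*w1^2 + (a-b)^2*w2^2 ≤ (a-b)^2 := by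
    nlinarith [mul_le_mul_of_nonneg_left hw (sq_nonneg (a-b))]
  nlinarith [f1, f2, f3, f4, sq_nonneg (a-b), sq_nonneg (v1-w1), sq_nonneg (v2-w2)]

abbrev E3 := EuclideanSpace ℝ (Fin 3)

def V (x : E3) : E3 :=
  (WithLp.equiv 2 (Fin 3 → ℝ)).symm
    ![2*(x 0)^3 - 3*(x 0), (1+2*(x 0)^2)*(x 1), (1+2*(x 0)^2)*(x 2)]

lemma V_apply_0 (x : E3) : V x 0 = 2*(x 0)^3 - 3*(x 0) := rfl
lemma V_apply_1 (x : E3) : V x 1 = (1+2*(x 0)^2)*(x 1) := rfl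
lemma V_apply_2 (x : E3) : V x 2 = (1+2*(x 0)^2)*(x 2) := rfl

lemma sum_sq_eq_one {x : E3} (hx : ‖x‖ = 1) :
    (x 0)^2 + (x 1)^2 + (x 2)^2 = 1 := by
  have h : ‖x‖^2 = 1 := by rw [hx]; norm_num
  rw [EuclideanSpace.norm_eq] at h
  rw [Real.sq_sqrt (by positivity)] at h
  simpa [Fin.sum_univ_three, Real.norm_eq_abs, sq_abs] using h

lemma norm_sub_sq_eq (u v : E3) :
    ‖u - v‖^2 = (u 0 - v 0)^2 + (u 1 - v 1)^2 + (u 2 - v 2)^2 := by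
  rw [EuclideanSpace.norm_eq, Real.sq_sqrt (by positivity)]
  simp [Fin.sum_univ_three, Real.norm_eq_abs, sq_abs]

lemma hasFDerivAt_norm_unit {x : E3} (hx : ‖x‖ = 1) :
    HasFDerivAt (fun y : E3 => ‖y‖) (innerSL ℝ x) x := by
  have hne : ‖x‖^2 ≠ 0 := by rw [hx]; norm_num
  have h1 : HasFDerivAt (fun y : E3 => ‖y‖^2) ((2:ℕ) • innerSL ℝ x) x :=
    (hasStrictFDerivAt_norm_sq x).hasFDerivAt
  have h2 : HasDerivAt Real.sqrt (1/(2*Real.sqrt (‖x‖^2))) (‖x‖^2) :=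
    Real.hasDerivAt_sqrt hne
  have h3 := h2.comp_hasFDerivAt x h1
  have h4 : (Real.sqrt ∘ fun y : E3 => ‖y‖^2) = fun y : E3 => ‖y‖ :=
    funext fun y => Real.sqrt_sq (norm_nonneg y)
  rw [h4] at h3
  have h5 : (1/(2*Real.sqrt (‖x‖^2))) • ((2:ℕ) • innerSL ℝ x) = innerSL ℝ x := by
    rw [hx]
    ext v
    simp
  rwa [h5] at h3

lemma gradient_u0_eq {x : E3} (hx : ‖x‖ = 1) :
    gradient u0 x = (Real.sqrt 2)⁻¹ • V x := by
  have hsum := sum_sq_eq_one hx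
  have hs2 : Real.sqrt 2 ^ 2 = 2 := Real.sq_sqrt (by norm_num)
  have hs2pos : 0 < Real.sqrt 2 := by positivity
  have hdne : Real.sqrt 2 * ‖x‖ ≠ 0 := by rw [hx]; simpa using hs2pos.ne'
  have hp0 : HasFDerivAt (fun y : E3 => y 0) (EuclideanSpace.proj (0 : Fin 3) : E3 →L[ℝ] ℝ) x := by
    exact (EuclideanSpace.proj (0 : Fin 3) : E3 →L[ℝ] ℝ).hasFDerivAt
  have hp1 : HasFDerivAt (fun y : E3 => y 1) (EuclideanSpace.proj (1 : Fin 3) : E3 →L[ℝ] ℝ) x := by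
    exact (EuclideanSpace.proj (1 : Fin 3) : E3 →L[ℝ] ℝ).hasFDerivAt
  have hp2 : HasFDerivAt (fun y : E3 => y 2) (EuclideanSpace.proj (2 : Fin 3) : E3 →L[ℝ] ℝ) x := by
    exact (EuclideanSpace.proj (2 : Fin 3) : E3 →L[ℝ] ℝ).hasFDerivAt
  have hf := ((hp1.mul hp1).add (hp2.mul hp2)).sub (hp0.mul hp0)
  have hden := (hasFDerivAt_norm_unit hx).const_mul (Real.sqrt 2)
  have hinv := (hasDerivAt_inv hdne).comp_hasFDerivAt x hden
  have htot := hf.mul hinv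
  have hu0 : u0 = fun y : E3 =>
      ((y 1)*(y 1) + (y 2)*(y 2) - (y 0)*(y 0)) * (Real.sqrt 2 * ‖y‖)⁻¹ := by
    funext y
    simp only [u0]
    rw [div_eq_mul_inv]
    ring
  refine HasGradientAt.gradient ?_
  rw [hasGradientAt_iff_hasFDerivAt, hu0]
  refine htot.congr_fderiv ?_
  symm
  apply ContinuousLinearMap.ext
  intro v
  rw [InnerProductSpace.toDual_apply_apply]
  simp only [PiLp.inner_apply, RCLike.inner_apply, conj_trivial, Fin.sum_univ_three,
    PiLp.smul_apply, smul_eq_mul, ContinuousLinearMap.add_apply,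
    ContinuousLinearMap.sub_apply, ContinuousLinearMap.smul_apply,
    ContinuousLinearMap.coe_smul', Pi.smul_apply, innerSL_apply_apply,
    Function.comp_apply, Pi.mul_apply, Pi.add_apply, Pi.sub_apply, PiLp.proj_apply, V_apply_0, V_apply_1, V_apply_2, hx]
  have e1 : ((Real.sqrt 2 * 1)^2 : ℝ) = 2 := by rw [mul_one, hs2]
  have e2 : (Real.sqrt 2 * 1 : ℝ)⁻¹ = Real.sqrt 2/2 := by
    rw [mul_one, eq_div_iff (by norm_num : (2:ℝ) ≠ 0), ← hs2]; field_simp; rw [Real.sqrt_sq hs2pos.le]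
  have e3 : (Real.sqrt 2 : ℝ)⁻¹ = Real.sqrt 2/2 := by
    rw [eq_div_iff (by norm_num : (2:ℝ) ≠ 0), ← hs2]; field_simp; rw [Real.sqrt_sq hs2pos.le]
  rw [e1, e2, e3]
  linear_combination (Real.sqrt 2 / 2 * (x 0 * v 0 + x 1 * v 1 + x 2 * v 2)) * hsum

lemma grad_diff_norm (x y : E3) (hx : ‖x‖ = 1) (hy : ‖y‖ = 1) :
    ‖gradient u0 x - gradient u0 y‖ = (Real.sqrt 2)⁻¹ * ‖V x - V y‖ := by
  rw [gradient_u0_eq hx, gradient_u0_eq hy, ← smul_sub, norm_smul]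
  congr 1
  rw [Real.norm_eq_abs, abs_of_nonneg (by positivity)]

end Statement18Aux

open Statement18Aux in
/-- `∇u₀` is Lipschitz on the unit sphere, and bi-Lipschitz from base points `x₀` that are
quantitatively away from the cone `{x₁² = x₂² + x₃²}`. -/
theorem statement18 :
    (∃ C > (0 : ℝ), ∀ x y : EuclideanSpace ℝ (Fin 3), ‖x‖ = 1 → ‖y‖ = 1 →
      ‖gradient u0 x - gradient u0 y‖ ≤ C * ‖x - y‖) ∧
    (∀ δ ∈ Set.Ioo (0 : ℝ) 1, ∃ c > (0 : ℝ),
      ∀ x x₀ : EuclideanSpace ℝ (Fin 3), ‖x‖ = 1 → ‖x₀‖ = 1 →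
        (x₀ 0) ^ 2 ≤ (1 - δ) * ((x₀ 1) ^ 2 + (x₀ 2) ^ 2) →
        c * ‖x - x₀‖ ≤ ‖gradient u0 x - gradient u0 x₀‖) := by
  have hs2 : Real.sqrt 2 ^ 2 = 2 := Real.sq_sqrt (by norm_num)
  have hinv2 : ((Real.sqrt 2 : ℝ)⁻¹)^2 = 1/2 := by
    rw [inv_pow, hs2]; norm_num
  constructor
  · refine ⟨6, by norm_num, fun x y hx hy => ?_⟩
    rw [grad_diff_norm x y hx hy]
    have hVsq : ‖V x - V y‖^2 = ((2*(x 0)^3-3*(x 0)) - (2*(y 0)^3-3*(y 0)))^2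
        + ((1+2*(x 0)^2)*(x 1) - (1+2*(y 0)^2)*(y 1))^2
        + ((1+2*(x 0)^2)*(x 2) - (1+2*(y 0)^2)*(y 2))^2 := by
      rw [norm_sub_sq_eq, V_apply_0, V_apply_1, V_apply_2,
        V_apply_0, V_apply_1, V_apply_2]
    have hxysq := norm_sub_sq_eq x y
    have hup := upper_scalar (x 0) (y 0) (x 1) (x 2) (y 1) (y 2)
      (by linarith [sum_sq_eq_one hx]) (by linarith [sum_sq_eq_one hy])
    have hsq : ((Real.sqrt 2)⁻¹ * ‖V x - V y‖)^2 ≤ (6 * ‖x - y‖)^2 := by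
      rw [mul_pow, mul_pow, hinv2, hVsq, hxysq]
      nlinarith [hup]
    have h1 : (0:ℝ) ≤ (Real.sqrt 2)⁻¹ * ‖V x - V y‖ := by positivity
    have h2 : (0:ℝ) ≤ 6 * ‖x - y‖ := by positivity
    nlinarith [hsq, h1, h2]
  · rintro δ ⟨hδ0, hδ1⟩
    refine ⟨δ^2/120, by positivity, fun x y hx hy hcone => ?_⟩
    rw [grad_diff_norm x y hx hy]
    have hVsq : ‖V x - V y‖^2 = ((2*(x 0)^3-3*(x 0)) - (2*(y 0)^3-3*(y 0)))^2
        + ((1+2*(x 0)^2)*(x 1) - (1+2*(y 0)^2)*(y 1))^2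
        + ((1+2*(x 0)^2)*(x 2) - (1+2*(y 0)^2)*(y 2))^2 := by
      rw [norm_sub_sq_eq, V_apply_0, V_apply_1, V_apply_2,
        V_apply_0, V_apply_1, V_apply_2]
    have hxysq := norm_sub_sq_eq x y
    have hlo := lower_scalar δ (x 0) (y 0) (x 1) (x 2) (y 1) (y 2) hδ0 hδ1
      (by linarith [sum_sq_eq_one hx]) (by linarith [sum_sq_eq_one hy]) hcone
    have hsq : (δ^2/120 * ‖x - y‖)^2 ≤ ((Real.sqrt 2)⁻¹ * ‖V x - V y‖)^2 := by
      rw [mul_pow, mul_pow, hinv2, hVsq, hxysq]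
      nlinarith [hlo, sq_nonneg (δ^2), sq_nonneg ‖x - y‖,
        mul_nonneg (sq_nonneg δ) (sq_nonneg δ)]
    have h1 : (0:ℝ) ≤ δ^2/120 * ‖x - y‖ := by positivity
    have h2 : (0:ℝ) ≤ (Real.sqrt 2)⁻¹ * ‖V x - V y‖ := by positivity
    nlinarith [hsq, h1, h2]

end
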